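/- If the Alexandroff duplicate AD(X) of a space X is star-Scheepers, then X is star-Scheepers. -/
import Mathlib


open Set

/-- The dominating number 𝔡: least cardinality of a dominating family in ℕ^ℕ. -/
noncomputable def dominatingNumber : Cardinal :=
  sInf { c | ∃ D : Set (ℕ → ℕ),
    (∀ g : ℕ → ℕ, ∃ f ∈ D, ∀ᶠ n in Filter.atTop, g n ≤ f n) ∧ c = Cardinal.mk D }

/-- `U` is an open cover of the space `X`. -/
def IsOpenCover {X : Type*} [TopologicalSpace X] (U : Set (Set X)) : Prop :=
  (∀ u ∈ U, IsOpen u) ∧ ⋃₀ U = Set.univ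

/-- The star of a set `A` with respect to a family `U`. -/
def starOf {X : Type*} (A : Set X) (U : Set (Set X)) : Set X :=
  ⋃₀ {B | B ∈ U ∧ (A ∩ B).Nonempty}

/-- The star-Scheepers property (ω-cover form). -/
def StarScheepers (X : Type*) [TopologicalSpace X] : Prop :=
  ∀ U : ℕ → Set (Set X), (∀ n, IsOpenCover (U n)) →
    ∃ V : ℕ → Set (Set X), (∀ n, V n ⊆ U n ∧ (V n).Finite) ∧
      ∀ F : Set X, F.Finite → ∃ n, F ⊆ starOf (⋃₀ V n) (U n)

/-- The strongly star-Scheepers property. -/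
def StronglyStarScheepers (X : Type*) [TopologicalSpace X] : Prop :=
  ∀ U : ℕ → Set (Set X), (∀ n, IsOpenCover (U n)) →
    ∃ F : ℕ → Set X, (∀ n, (F n).Finite) ∧
      ∀ G : Set X, G.Finite → ∃ n, G ⊆ starOf (F n) (U n)

/-- The topology of the Alexandroff duplicate AD(X) on X × Bool:
points (x, true) are isolated, and basic neighbourhoods of (x, false)
are (U × {false,true}) \ {(x, true)} for U an open neighbourhood of x. -/
def ADTop (X : Type*) [TopologicalSpace X] : TopologicalSpace (X × Bool) :=
  TopologicalSpace.generateFrom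
    ({S | ∃ x : X, S = {(x, true)}} ∪
     {S | ∃ (x : X) (U : Set X), IsOpen U ∧ x ∈ U ∧
        S = (U ×ˢ (Set.univ : Set Bool)) \ {(x, true)}})


lemma ad_open_prod {X : Type*} [TopologicalSpace X] {u : Set X} (hu : IsOpen u) :
    @IsOpen _ (ADTop X) (u ×ˢ (Set.univ : Set Bool)) := by
  have heq : u ×ˢ (Set.univ : Set Bool) =
      ⋃₀ {s | (∃ x ∈ u, s = {((x : X), true)}) ∨
        (∃ x ∈ u, s = (u ×ˢ (Set.univ : Set Bool)) \ {(x, true)})} := by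
    ext ⟨y, b⟩
    simp only [Set.mem_sUnion, Set.mem_setOf_eq, Set.mem_prod, Set.mem_univ, and_true]
    constructor
    · intro hy
      cases b with
      | true => exact ⟨{(y, true)}, Or.inl ⟨y, hy, rfl⟩, rfl⟩
      | false =>
        refine ⟨(u ×ˢ (Set.univ : Set Bool)) \ {(y, true)}, Or.inr ⟨y, hy, rfl⟩, ?_⟩
        simp [hy]
    · rintro ⟨s, (⟨x, hx, rfl⟩ | ⟨x, hx, rfl⟩), hs⟩
      · simp only [Set.mem_singleton_iff, Prod.mk.injEq] at hs
        exact hs.1 ▸ hx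
      · exact hs.1.1
  rw [heq]
  apply TopologicalSpace.GenerateOpen.sUnion
  rintro s (⟨x, hx, rfl⟩ | ⟨x, hx, rfl⟩)
  · exact TopologicalSpace.GenerateOpen.basic _ (Or.inl ⟨x, rfl⟩)
  · exact TopologicalSpace.GenerateOpen.basic _ (Or.inr ⟨x, u, hu, hx, rfl⟩)

theorem stmt_13 {X : Type*} [TopologicalSpace X]
    (h : @StarScheepers (X × Bool) (ADTop X)) :
    StarScheepers X := by
  intro U hU
  set f : Set X → Set (X × Bool) := fun u => u ×ˢ (Set.univ : Set Bool) with hf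
  set W : ℕ → Set (Set (X × Bool)) := fun n => f '' U n with hWdef
  have hfi : Function.Injective f := by
    intro a b hab
    ext x
    constructor
    · intro hx
      have : (x, true) ∈ f b := hab ▸ (⟨hx, trivial⟩ : (x, true) ∈ f a)
      exact this.1
    · intro hx
      have : (x, true) ∈ f a := hab.symm ▸ (⟨hx, trivial⟩ : (x, true) ∈ f b)
      exact this.1
  have hWcov : ∀ n, @IsOpenCover _ (ADTop X) (W n) := by
    intro n
    constructor
    · rintro v ⟨u, hu, rfl⟩
      exact ad_open_prod ((hU n).1 u hu)
    · ext ⟨x, b⟩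
      simp only [Set.mem_univ, iff_true, Set.mem_sUnion]
      have hx : x ∈ ⋃₀ U n := by rw [(hU n).2]; trivial
      obtain ⟨u, hu, hxu⟩ := hx
      exact ⟨f u, ⟨u, hu, rfl⟩, ⟨hxu, trivial⟩⟩
  obtain ⟨V, hVsub, hVstar⟩ := h W hWcov
  refine ⟨fun n => {u | u ∈ U n ∧ f u ∈ V n}, fun n => ⟨fun u hu => hu.1, ?_⟩, ?_⟩
  · have himg : f '' {u | u ∈ U n ∧ f u ∈ V n} ⊆ V n := by
      rintro s ⟨u, hu, rfl⟩; exact hu.2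
    exact Set.Finite.of_finite_image (((hVsub n).2).subset himg) (hfi.injOn)
  · intro F hF
    obtain ⟨n, hn⟩ := hVstar (F ×ˢ ({false} : Set Bool))
      (hF.prod (Set.finite_singleton _))
    refine ⟨n, fun x hx => ?_⟩
    have hmem : ((x, false) : X × Bool) ∈ starOf (⋃₀ V n) (W n) :=
      hn ⟨hx, rfl⟩
    obtain ⟨B, ⟨hBW, hBne⟩, hxB⟩ := hmem
    obtain ⟨u, huU, rfl⟩ := hBW
    obtain ⟨⟨y, b⟩, ⟨s, hsV, hys⟩, hyu⟩ := hBne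
    obtain ⟨v, hvU, rfl⟩ := (hVsub n).1 hsV
    refine ⟨u, ⟨huU, ⟨y, ⟨v, ⟨hvU, hsV⟩, hys.1⟩, hyu.1⟩⟩, hxB.1⟩
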